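/- Fix λ > 0 and let ζ = ζ₂(λ) be the unique positive solution of ζ/(1-e^{-ζ}) = 1+λ. Then the function γ(x) = (1 - e^{-xζ})/ζ solves the ODE y'(x) = φ₂((x - y)/y) with initial condition γ(1) = 1/(1+λ), where φ₂(μ) = e^{-ζ₂(μ)} for μ > 0. -/

import Mathlib

open Real

lemma f_hasDerivAt (z : ℝ) (hz : 0 < z) :
    HasDerivAt (fun z : ℝ => z / (1 - exp (-z)))
      ((1 * (1 - exp (-z)) - z * exp (-z)) / (1 - exp (-z))^2) z := by
  have hne : 1 - exp (-z) ≠ 0 := by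
    have : exp (-z) < 1 := exp_lt_one_iff.2 (by linarith)
    linarith
  have h1 : HasDerivAt (fun z : ℝ => z) 1 z := hasDerivAt_id z
  have h2 : HasDerivAt (fun z : ℝ => 1 - exp (-z)) (exp (-z)) z := by
    have := ((hasDerivAt_neg z).exp)
    have h := (hasDerivAt_const z (1:ℝ)).sub this
    simpa [Pi.sub_def] using h
  simpa [Pi.div_def] using h1.div h2 hne

lemma f_injOn : Set.InjOn (fun z : ℝ => z / (1 - exp (-z))) (Set.Ioi 0) := by
  have hmono : StrictMonoOn (fun z : ℝ => z / (1 - exp (-z))) (Set.Ioi 0) := by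
    apply strictMonoOn_of_deriv_pos (convex_Ioi 0)
    · intro z hz
      exact ((f_hasDerivAt z hz).continuousAt).continuousWithinAt
    · intro z hz
      rw [interior_Ioi] at hz
      rw [(f_hasDerivAt z hz).deriv]
      have hzpos : (0:ℝ) < z := hz
      have hlt : exp (-z) < 1 := exp_lt_one_iff.2 (by linarith)
      have key : z * exp (-z) < 1 - exp (-z) := by
        have h := add_one_lt_exp (x := -z) (by linarith)
        -- 1 - z < exp z ... we need (z+1) * exp(-z) < 1
        have hez : (0:ℝ) < exp (-z) := exp_pos _
        have h2 : (-z + 1) * exp z < 1 * exp z := by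
          nlinarith [add_one_lt_exp (x := z) (by linarith : z ≠ 0), exp_pos z]
        -- direct: (z+1)*exp(-z) < 1  ⟺ z+1 < exp z
        have h3 : z + 1 < exp z := by
          have := add_one_lt_exp (x := z) (by linarith : z ≠ 0)
          linarith
        have h4 : (z + 1) * exp (-z) < exp z * exp (-z) :=
          mul_lt_mul_of_pos_right h3 hez
        rw [← exp_add] at h4
        simp at h4
        linarith
      apply div_pos (by linarith) (pow_pos (by linarith) 2)
  exact hmono.injOn

/-- The field line `γ` for the Stirling-second-kind vector field: with `ζ = ζ₂(λ)` the
unique positive solution of `ζ/(1-e^{-ζ}) = 1+λ`, the curve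
`γ(x) = (1 - e^{-xζ})/ζ` satisfies `γ(1) = 1/(1+λ)` and `γ' (x) = φ₂((x-γ x)/γ x)`
where `φ₂(μ) = e^{-ζ₂(μ)}`. -/
theorem field_line_stirling2 (lam : ℝ) (hlam : 0 < lam)
    (zeta2 : ℝ → ℝ)
    (hz : ∀ mu : ℝ, 0 < mu →
      0 < zeta2 mu ∧ zeta2 mu / (1 - exp (-(zeta2 mu))) = 1 + mu)
    (γ : ℝ → ℝ) (hγ : γ = fun x => (1 - exp (-(x * zeta2 lam))) / zeta2 lam) :
    γ 1 = 1 / (1 + lam) ∧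
    ∀ x : ℝ, 0 < x → HasDerivAt γ (exp (-(zeta2 ((x - γ x) / γ x)))) x := by
  obtain ⟨hζpos, hζeq⟩ := hz lam hlam
  set ζ := zeta2 lam with hζdef
  have hζne : ζ ≠ 0 := ne_of_gt hζpos
  have hden : 0 < 1 - exp (-ζ) := by
    have : exp (-ζ) < 1 := exp_lt_one_iff.2 (by linarith)
    linarith
  constructor
  · rw [hγ]
    simp only
    rw [one_mul]
    field_simp at hζeq ⊢
    linarith
  · intro x hx
    have htpos : 0 < x * ζ := mul_pos hx hζpos
    have htden : 0 < 1 - exp (-(x * ζ)) := by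
      have : exp (-(x * ζ)) < 1 := exp_lt_one_iff.2 (by linarith)
      linarith
    have hγx : γ x = (1 - exp (-(x * ζ))) / ζ := by rw [hγ]
    have hγxpos : 0 < γ x := by rw [hγx]; positivity
    set μ := (x - γ x) / γ x with hμdef
    have hμform : 1 + μ = (x * ζ) / (1 - exp (-(x * ζ))) := by
      rw [hμdef, hγx]
      field_simp
      ring
    have hμpos : 0 < μ := by
      have hft : 1 < (x * ζ) / (1 - exp (-(x * ζ))) := by
        rw [lt_div_iff₀ htden]
        have h := add_one_lt_exp (x := -(x * ζ)) (neg_ne_zero.2 (by positivity))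
        linarith
      linarith [hμform ▸ hft]
    obtain ⟨hzμpos, hzμeq⟩ := hz μ hμpos
    have hkey : zeta2 μ = x * ζ := by
      apply f_injOn (Set.mem_Ioi.2 hzμpos) (Set.mem_Ioi.2 htpos)
      simp only
      rw [hzμeq, hμform]
    rw [hkey]
    rw [hγ]
    have h1 : HasDerivAt (fun y : ℝ => y * ζ) ζ x := by
      simpa using (hasDerivAt_id x).mul_const ζ
    have h2 : HasDerivAt (fun y : ℝ => exp (-(y * ζ))) (exp (-(x * ζ)) * (-ζ)) x := by
      exact (h1.neg.exp)
    have h3 : HasDerivAt (fun y : ℝ => (1 - exp (-(y * ζ))) / ζ)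
        ((0 - exp (-(x * ζ)) * (-ζ)) / ζ) x :=
      (((hasDerivAt_const x (1:ℝ)).sub h2).div_const ζ)
    convert h3 using 1
    field_simp
    ring
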